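/- Let λ > 0, ε ∈ [0,1], β ≥ 0, Δ_IN > 0, Δ_OUT > 0 be fixed real numbers, with Γ = 1 + ε(β-1), Δ_eff = (1-ε)Δ_IN + εΔ_OUT, Λ = 1 + Δ_eff + ε(β²-1). For α > 0 let m(α) = 2αΓ/(α + λ + t(α) + 1) and q(α) = 4α[αΓ²(p+t(α)-3) + Λ(p+t(α)+1)] / [(p+t(α)+1)(p² - 2c + t(α)² + 2t(α)(p+1) + 1)], where p = α + λ, c = α - λ, t(α) = √((p-1)² + 4λ). Then the estimation error E_estim(α) = 1 + q(α) - 2m(α) tends to (β-1)²ε² as α → ∞. In particular, for ε ∈ (0,1) and β ≠ 1, ridge regression with any fixed positive regularisation is not consistent for the estimation error. -/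

import Mathlib

open Filter

/-- The estimation error of ridge regression on the double-Gaussian outlier model
tends to (β-1)²ε² as α → ∞; in particular, for ε ∈ (0,1) and β ≠ 1, ridge
regression with any fixed positive regularisation is not consistent for the
estimation error. -/
theorem ridge_estimation_error_not_consistent
    (lam ε β ΔIN ΔOUT : ℝ) (hlam : 0 < lam) (hε : ε ∈ Set.Icc (0 : ℝ) 1) (hβ : 0 ≤ β)
    (hIN : 0 < ΔIN) (hOUT : 0 < ΔOUT)
    (Γ Δeff Λ : ℝ)
    (hΓ : Γ = 1 + ε * (β - 1))
    (hΔeff : Δeff = (1 - ε) * ΔIN + ε * ΔOUT)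
    (hΛ : Λ = 1 + Δeff + ε * (β ^ 2 - 1))
    (t m q Eestim : ℝ → ℝ)
    (ht : ∀ α : ℝ, t α = Real.sqrt ((α + lam - 1) ^ 2 + 4 * lam))
    (hm : ∀ α : ℝ, m α = 2 * α * Γ / (α + lam + t α + 1))
    (hq : ∀ α : ℝ, q α =
      4 * α * (α * Γ ^ 2 * (α + lam + t α - 3) + Λ * (α + lam + t α + 1)) /
        ((α + lam + t α + 1) *
          ((α + lam) ^ 2 - 2 * (α - lam) + (t α) ^ 2 + 2 * t α * (α + lam + 1) + 1)))
    (hE : ∀ α : ℝ, Eestim α = 1 + q α - 2 * m α) :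
    Tendsto Eestim atTop (nhds ((β - 1) ^ 2 * ε ^ 2)) ∧
    (0 < ε → ε < 1 → β ≠ 1 → ¬ Tendsto Eestim atTop (nhds 0)) := by
  -- basic limits
  have hdiv : ∀ c : ℝ, Tendsto (fun α : ℝ => c / α) atTop (nhds 0) := by
    intro c
    simpa [div_eq_mul_inv] using tendsto_inv_atTop_zero.const_mul c
  have hdiv2 : ∀ c : ℝ, Tendsto (fun α : ℝ => c / α ^ 2) atTop (nhds 0) := by
    intro c
    have := (hdiv c).mul (hdiv 1)
    simpa using this.congr (fun α => by ring)
  have htnn : ∀ α : ℝ, 0 ≤ t α := fun α => (ht α) ▸ Real.sqrt_nonneg _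
  -- limit of t α / α
  have hs : Tendsto (fun α : ℝ => t α / α) atTop (nhds 1) := by
    have hin : Tendsto (fun α : ℝ => (1 + (lam - 1) / α) ^ 2 + 4 * lam / α ^ 2) atTop
        (nhds 1) := by
      have h1 : Tendsto (fun α : ℝ => 1 + (lam - 1) / α) atTop (nhds 1) := by
        simpa using tendsto_const_nhds.add (hdiv (lam - 1))
      have := ((h1.mul h1).add (hdiv2 (4 * lam)))
      simpa [sq] using this
    have hsq : Tendsto (fun α : ℝ => Real.sqrt ((1 + (lam - 1) / α) ^ 2 + 4 * lam / α ^ 2))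
        atTop (nhds 1) := by
      have := (Real.continuous_sqrt.tendsto 1).comp hin
      simpa [Function.comp_def] using this
    refine hsq.congr' ?_
    filter_upwards [eventually_gt_atTop (0 : ℝ)] with α hα
    have hα2 : (0:ℝ) < α ^ 2 := by positivity
    have : (1 + (lam - 1) / α) ^ 2 + 4 * lam / α ^ 2
        = ((α + lam - 1) ^ 2 + 4 * lam) / α ^ 2 := by
      field_simp
      ring
    have hx : (0:ℝ) ≤ (α + lam - 1) ^ 2 + 4 * lam := by positivity
    rw [this, Real.sqrt_div hx, Real.sqrt_sq hα.le, ht]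
  -- limit of m
  have hmlim : Tendsto m atTop (nhds Γ) := by
    have h1 : Tendsto (fun _ : ℝ => (1:ℝ)) atTop (nhds 1) := tendsto_const_nhds
    have hden : Tendsto (fun α : ℝ => 1 + lam / α + t α / α + 1 / α) atTop (nhds 2) := by
      have h := ((h1.add (hdiv lam)).add hs).add (hdiv 1)
      rwa [show (1:ℝ) + 0 + 1 + 0 = 2 by norm_num] at h
    have key : Tendsto (fun α : ℝ => 2 * Γ / (1 + lam / α + t α / α + 1 / α)) atTop
        (nhds Γ) := by
      have h := (tendsto_const_nhds (x := 2 * Γ)).div hden (by norm_num : (2:ℝ) ≠ 0)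
      rwa [show 2 * Γ / 2 = Γ by ring] at h
    refine key.congr' ?_
    filter_upwards [eventually_gt_atTop (0 : ℝ)] with α hα
    have heq : (α + lam + t α + 1) / α = 1 + lam / α + t α / α + 1 / α := by
      field_simp
    rw [hm, ← heq, div_div_eq_mul_div]
    ring
  -- limit of q
  have hqlim : Tendsto q atTop (nhds (Γ ^ 2)) := by
    have h1 : Tendsto (fun _ : ℝ => (1:ℝ)) atTop (nhds 1) := tendsto_const_nhds
    have hA : Tendsto (fun α : ℝ => 1 + (lam + 1) / α + t α / α) atTop (nhds 2) := by
      have h := (h1.add (hdiv (lam + 1))).add hs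
      rwa [show (1:ℝ) + 0 + 1 = 2 by norm_num] at h
    have hB : Tendsto (fun α : ℝ => 1 + (lam - 3) / α + t α / α) atTop (nhds 2) := by
      have h := (h1.add (hdiv (lam - 3))).add hs
      rwa [show (1:ℝ) + 0 + 1 = 2 by norm_num] at h
    have hL : Tendsto (fun α : ℝ => 1 + lam / α) atTop (nhds 1) := by
      have h := h1.add (hdiv lam)
      rwa [show (1:ℝ) + 0 = 1 by norm_num] at h
    have hL2 : Tendsto (fun α : ℝ => 1 + (lam + 1) / α) atTop (nhds 1) := by
      have h := h1.add (hdiv (lam + 1))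
      rwa [show (1:ℝ) + 0 = 1 by norm_num] at h
    have hC : Tendsto (fun α : ℝ => (1 + lam / α) ^ 2 - 2 * (1 / α - lam / α ^ 2)
        + (t α / α) ^ 2 + 2 * (t α / α) * (1 + (lam + 1) / α) + 1 / α ^ 2) atTop
        (nhds 4) := by
      have h := (((((hL.pow 2).sub (((hdiv 1).sub (hdiv2 lam)).const_mul 2)).add
        (hs.pow 2)).add ((hs.const_mul 2).mul hL2)).add (hdiv2 1))
      rwa [show (1:ℝ) ^ 2 - 2 * (0 - 0) + 1 ^ 2 + 2 * 1 * 1 + 0 = 4 by norm_num] at h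
    have hnum : Tendsto (fun α : ℝ => 4 * (Γ ^ 2 * (1 + (lam - 3) / α + t α / α)
        + Λ * (1 / α * (1 + (lam + 1) / α + t α / α)))) atTop (nhds (8 * Γ ^ 2)) := by
      have h := ((hB.const_mul (Γ ^ 2)).add (((hdiv 1).mul hA).const_mul Λ)).const_mul 4
      rwa [show 4 * (Γ ^ 2 * 2 + Λ * (0 * 2)) = 8 * Γ ^ 2 by ring] at h
    have hden : Tendsto (fun α : ℝ => (1 + (lam + 1) / α + t α / α)
        * ((1 + lam / α) ^ 2 - 2 * (1 / α - lam / α ^ 2) + (t α / α) ^ 2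
          + 2 * (t α / α) * (1 + (lam + 1) / α) + 1 / α ^ 2)) atTop (nhds 8) := by
      have h := hA.mul hC
      rwa [show (2:ℝ) * 4 = 8 by norm_num] at h
    have key := hnum.div hden (by norm_num : (8:ℝ) ≠ 0)
    rw [show 8 * Γ ^ 2 / 8 = Γ ^ 2 by ring] at key
    refine key.congr' ?_
    filter_upwards [eventually_gt_atTop (0 : ℝ)] with α hα
    have hApos : (0:ℝ) < α + lam + t α + 1 := by
      have := htnn α; linarith
    have ht2 : (t α) ^ 2 = (α + lam - 1) ^ 2 + 4 * lam := by
      rw [ht]; exact Real.sq_sqrt (by positivity)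
    have hCpos : (0:ℝ) < (α + lam) ^ 2 - 2 * (α - lam) + (t α) ^ 2
        + 2 * t α * (α + lam + 1) + 1 := by
      have h2 : 0 ≤ 2 * t α * (α + lam + 1) := by
        have := htnn α; positivity
      nlinarith [sq_nonneg (α + lam - 1)]
    have hA2 : (0:ℝ) < 1 + (lam + 1) / α + t α / α := by
      have := htnn α; positivity
    have hC2 : (0:ℝ) < (1 + lam / α) ^ 2 - 2 * (1 / α - lam / α ^ 2) + (t α / α) ^ 2
        + 2 * (t α / α) * (1 + (lam + 1) / α) + 1 / α ^ 2 := by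
      have hC3 : (1 + lam / α) ^ 2 - 2 * (1 / α - lam / α ^ 2) + (t α / α) ^ 2
          + 2 * (t α / α) * (1 + (lam + 1) / α) + 1 / α ^ 2
          = ((α + lam) ^ 2 - 2 * (α - lam) + (t α) ^ 2 + 2 * t α * (α + lam + 1) + 1)
            / α ^ 2 := by
        field_simp
        ring
      rw [hC3]
      positivity
    simp only [Pi.div_apply]
    rw [hq, div_eq_div_iff (mul_pos hA2 hC2).ne' (mul_pos hApos hCpos).ne']
    field_simp
    ring
  -- combine
  have hmain : Tendsto Eestim atTop (nhds ((β - 1) ^ 2 * ε ^ 2)) := by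
    have h := ((tendsto_const_nhds (x := (1:ℝ))).add hqlim).sub (hmlim.const_mul 2)
    have heq : (1:ℝ) + Γ ^ 2 - 2 * Γ = (β - 1) ^ 2 * ε ^ 2 := by
      rw [hΓ]; ring
    rw [heq] at h
    refine h.congr (fun α => ?_)
    rw [hE]
  refine ⟨hmain, fun hε0 hε1 hβ1 hcon => ?_⟩
  have huniq : (β - 1) ^ 2 * ε ^ 2 = 0 := tendsto_nhds_unique hmain hcon
  have hne : (β - 1) ^ 2 * ε ^ 2 ≠ 0 := by
    have h1 : β - 1 ≠ 0 := sub_ne_zero.mpr hβ1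
    positivity
  exact hne huniq
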